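/- Let G be a continuous cdf on ℝ with a pdf, symmetric about 0 (i.e., G(−t) = 1 − G(t) for all t). Let Z₁ and Z₂ be independent random variables each with cdf G, and for σ₁, σ₂ > 0 set X = θ + σ₁Z₁ and Y = θ + σ₂Z₂, so X and Y belong to the location-scale family generated by G with common location θ. If σ₁ < σ₂, then X is Pitman closer to θ than Y, i.e., P(|X − θ| < |Y − θ|) ≥ 1/2. -/

import Mathlib

open MeasureTheory ProbabilityTheory
open scoped ENNReal

/-- Lemma 7, location-scale families.  Let `G` be a continuous cdf
on `ℝ` with a pdf, symmetric about `0` (`G(-t) = 1 - G(t)`), the cdf of a probability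
measure `ν`.  Let `Z₁, Z₂` be independent with distribution `ν`, and for `σ₁, σ₂ > 0`
set `X = θ + σ₁ Z₁`, `Y = θ + σ₂ Z₂`.  If `σ₁ < σ₂` then `X` is Pitman closer to `θ`
than `Y`. -/
theorem pitman_closer_location_scale
    {Ω : Type*} [MeasurableSpace Ω] (μ : Measure Ω) [IsProbabilityMeasure μ]
    (ν : Measure ℝ) [IsProbabilityMeasure ν]
    -- `ν` has a pdf and cdf `G`, with `G` continuous and symmetric about `0`
    (gd : ℝ → ℝ) (hpdf : ν = volume.withDensity (fun x => ENNReal.ofReal (gd x)))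
    (G : ℝ → ℝ) (hG : ∀ t, G t = (ν (Set.Iic t)).toReal)
    (hGcont : Continuous G) (hGsym : ∀ t, G (-t) = 1 - G t)
    -- `Z₁, Z₂` independent, each with distribution `ν`
    (Z₁ Z₂ : Ω → ℝ) (hZ₁meas : Measurable Z₁) (hZ₂meas : Measurable Z₂)
    (hindep : IndepFun Z₁ Z₂ μ)
    (hZ₁ : Measure.map Z₁ μ = ν) (hZ₂ : Measure.map Z₂ μ = ν)
    (θ σ₁ σ₂ : ℝ) (hσ₁ : 0 < σ₁) (hσ₂ : 0 < σ₂) (hσ : σ₁ < σ₂) :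
    (μ {ω | |(θ + σ₁ * Z₁ ω) - θ| < |(θ + σ₂ * Z₂ ω) - θ|}).toReal ≥ 1 / 2 := by
  -- ν has no atom at 0
  have hν0 : ν {0} = 0 := by
    rw [hpdf]
    exact (withDensity_absolutelyContinuous _ _) (measure_singleton 0)
  -- joint law
  have hmap : Measure.map (fun ω => (Z₁ ω, Z₂ ω)) μ = ν.prod ν := by
    rw [(indepFun_iff_map_prod_eq_prod_map_map hZ₁meas.aemeasurable
        hZ₂meas.aemeasurable).mp hindep, hZ₁, hZ₂]
  set B : Set (ℝ × ℝ) := {p | |σ₁ * p.1| < |σ₂ * p.2|} with hB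
  have hBmeas : MeasurableSet B := by
    apply measurableSet_lt <;> fun_prop
  set T : Set (ℝ × ℝ) := {p | |p.1| ≤ |p.2|} with hT
  have hTmeas : MeasurableSet T := by
    apply measurableSet_le <;> fun_prop
  -- the goal set is the preimage of B
  have hset : {ω | |(θ + σ₁ * Z₁ ω) - θ| < |(θ + σ₂ * Z₂ ω) - θ|}
      = (fun ω => (Z₁ ω, Z₂ ω)) ⁻¹' B := by
    ext ω
    simp [hB, add_sub_cancel_left]
  have hμB : μ {ω | |(θ + σ₁ * Z₁ ω) - θ| < |(θ + σ₂ * Z₂ ω) - θ|} = (ν.prod ν) B := by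
    rw [hset, ← hmap, Measure.map_apply (hZ₁meas.prodMk hZ₂meas) hBmeas]
  -- T minus the null line {p.2 = 0} is contained in B
  have hN : (ν.prod ν) (Set.univ ×ˢ ({0} : Set ℝ)) = 0 := by
    rw [Measure.prod_prod, hν0, mul_zero]
  have hsub : T \ (Set.univ ×ˢ ({0} : Set ℝ)) ⊆ B := by
    rintro ⟨x, y⟩ ⟨hxy, hy⟩
    simp only [Set.mem_prod, Set.mem_univ, Set.mem_singleton_iff, true_and] at hy
    have hy' : 0 < |y| := abs_pos.mpr hy
    simp only [hB, Set.mem_setOf_eq, abs_mul, abs_of_pos hσ₁, abs_of_pos hσ₂]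
    calc σ₁ * |x| ≤ σ₁ * |y| := by
          exact mul_le_mul_of_nonneg_left hxy hσ₁.le
      _ < σ₂ * |y| := by exact mul_lt_mul_of_pos_right hσ hy'
  have hTB : (ν.prod ν) T ≤ (ν.prod ν) B := by
    calc (ν.prod ν) T = (ν.prod ν) (T \ (Set.univ ×ˢ ({0} : Set ℝ))) :=
          (measure_diff_null hN).symm
      _ ≤ (ν.prod ν) B := measure_mono hsub
  -- swap symmetry: (ν.prod ν) Tᶜ ≤ (ν.prod ν) T
  have hswap : (ν.prod ν) Tᶜ ≤ (ν.prod ν) T := by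
    have h1 : (ν.prod ν) (Prod.swap ⁻¹' Tᶜ) = (ν.prod ν) Tᶜ :=
      (Measure.measurePreserving_swap).measure_preimage hTmeas.compl.nullMeasurableSet
    have h2 : Prod.swap ⁻¹' Tᶜ ⊆ T := by
      rintro ⟨x, y⟩ h
      simp only [hT, Set.preimage_compl, Set.mem_compl_iff, Set.mem_preimage, Prod.swap_prod_mk,
        Set.mem_setOf_eq, not_le] at h ⊢
      exact h.le
    calc (ν.prod ν) Tᶜ = (ν.prod ν) (Prod.swap ⁻¹' Tᶜ) := h1.symm
      _ ≤ (ν.prod ν) T := measure_mono h2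
  have hone : (ν.prod ν) T + (ν.prod ν) Tᶜ = 1 := by
    rw [measure_add_measure_compl hTmeas, measure_univ]
  have h2T : (1 : ℝ≥0∞) ≤ (ν.prod ν) T + (ν.prod ν) T := by
    calc (1 : ℝ≥0∞) = (ν.prod ν) T + (ν.prod ν) Tᶜ := hone.symm
      _ ≤ _ := add_le_add le_rfl hswap
  -- pass to reals
  have hTne : (ν.prod ν) T ≠ ⊤ := measure_ne_top _ _
  have hBne : (ν.prod ν) B ≠ ⊤ := measure_ne_top _ _
  have hTreal : (1 : ℝ) ≤ ((ν.prod ν) T).toReal + ((ν.prod ν) T).toReal := by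
    have := ENNReal.toReal_mono (by finiteness) h2T
    rwa [ENNReal.toReal_one, ENNReal.toReal_add hTne hTne] at this
  have hBreal : ((ν.prod ν) T).toReal ≤ ((ν.prod ν) B).toReal :=
    ENNReal.toReal_mono hBne hTB
  rw [hμB]
  linarith
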